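/- Let A = (0, a_2, a_3, …) be a sequence of nonnegative integers with a_1 = 0. Then Σ_{m=0}^{∞} m·e_{A,m} = Σ_p Σ_{j=2}^{∞} a_j (1/p^j − 1/p^{j+1}), where the outer sum runs over all primes p; that is, the expectation of the limiting distribution of ω_A(n) equals Σ_p Σ_{j=2}^{∞} a_j (1/p^j − 1/p^{j+1}) (both sides possibly being +∞). -/

import Mathlib

open scoped BigOperators

/-- A positive integer is *powerful* if every prime dividing it divides it with
multiplicity at least `2`. -/
def Powerful (f : ℕ) : Prop := 0 < f ∧ ∀ p : ℕ, p.Prime → p ∣ f → p ^ 2 ∣ f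

/-- The additive function `ω_A(n) = ∑_j a_j ω_j(n)` for a sequence of natural numbers. -/
def omegaA (a : ℕ → ℕ) (n : ℕ) : ℕ :=
  ∑ p ∈ n.primeFactors, a (n.factorization p)

/-- The density `e_{A,m}` of integers `n` with `ω_A(n) = m`. -/
noncomputable def eAm (a : ℕ → ℕ) (m : ℕ) : ℝ :=
  6 / Real.pi ^ 2 *
    ∑' f : {f : ℕ // Powerful f ∧ omegaA a f = m},
      ((f : ℕ) : ℝ)⁻¹ * ∏ p ∈ (f : ℕ).primeFactors, (1 + 1 / (p : ℝ))⁻¹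

namespace EAMaux

open Real

noncomputable instance : DecidablePred Powerful := fun _ => Classical.propDecidable _

/-- The basic real-valued multiplicative function: `F f = 1/f ∏_{p ∣ f} (1+1/p)⁻¹` for
powerful `f`, and `0` otherwise. -/
noncomputable def F (n : ℕ) : ℝ :=
  if Powerful n then (n : ℝ)⁻¹ * ∏ p ∈ n.primeFactors, (1 + 1 / (p : ℝ))⁻¹ else 0

lemma not_powerful_zero : ¬ Powerful 0 := fun h => lt_irrefl 0 h.1

lemma powerful_one : Powerful 1 :=
  ⟨one_pos, fun p hp hd => absurd (Nat.dvd_one.mp hd) hp.ne_one⟩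

lemma F_zero : F 0 = 0 := by simp [F, not_powerful_zero]

lemma F_one : F 1 = 1 := by simp [F, powerful_one]

lemma F_nonneg (n : ℕ) : 0 ≤ F n := by
  rw [F]
  split
  · exact mul_nonneg (by positivity) (Finset.prod_nonneg fun p _ => by positivity)
  · exact le_refl 0

lemma F_le_inv (n : ℕ) : F n ≤ (n : ℝ)⁻¹ := by
  rw [F]
  split
  · refine mul_le_of_le_one_right (by positivity) ?_
    refine Finset.prod_le_one (fun p _ => by positivity) (fun p _ => ?_)
    have h : (0:ℝ) ≤ 1 / (p:ℝ) := by positivity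
    exact inv_le_one_of_one_le₀ (by linarith)
  · positivity

lemma powerful_mul_iff {m n : ℕ} (h : Nat.Coprime m n) :
    Powerful (m * n) ↔ Powerful m ∧ Powerful n := by
  constructor
  · rintro ⟨hpos, hdvd⟩
    have hm0 : m ≠ 0 := by rintro rfl; simp at hpos
    have hn0 : n ≠ 0 := by rintro rfl; simp at hpos
    constructor
    · refine ⟨Nat.pos_of_ne_zero hm0, fun p hp hd => ?_⟩
      have hpn : ¬ p ∣ n := fun hpn =>
        hp.ne_one (Nat.eq_one_of_dvd_coprimes h hd hpn)
      have hcop : Nat.Coprime (p ^ 2) n := (hp.coprime_iff_not_dvd.mpr hpn).pow_left 2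
      exact hcop.dvd_of_dvd_mul_right (hdvd p hp (hd.mul_right n))
    · refine ⟨Nat.pos_of_ne_zero hn0, fun p hp hd => ?_⟩
      have hpm : ¬ p ∣ m := fun hpm =>
        hp.ne_one (Nat.eq_one_of_dvd_coprimes h hpm hd)
      have hcop : Nat.Coprime (p ^ 2) m := (hp.coprime_iff_not_dvd.mpr hpm).pow_left 2
      exact hcop.dvd_of_dvd_mul_left (hdvd p hp (hd.mul_left m))
  · rintro ⟨⟨hm, hmd⟩, ⟨hn, hnd⟩⟩
    refine ⟨Nat.mul_pos hm hn, fun p hp hd => ?_⟩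
    rcases (Nat.Prime.dvd_mul hp).mp hd with hd' | hd'
    · exact dvd_mul_of_dvd_left (hmd p hp hd') n
    · exact dvd_mul_of_dvd_right (hnd p hp hd') m

lemma F_mul {m n : ℕ} (h : Nat.Coprime m n) : F (m * n) = F m * F n := by
  by_cases hP : Powerful m ∧ Powerful n
  · obtain ⟨hPm, hPn⟩ := hP
    have hm0 : m ≠ 0 := hPm.1.ne'
    have hn0 : n ≠ 0 := hPn.1.ne'
    rw [F, F, F, if_pos ((powerful_mul_iff h).mpr ⟨hPm, hPn⟩), if_pos hPm, if_pos hPn,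
      Nat.primeFactors_mul hm0 hn0, Finset.prod_union h.disjoint_primeFactors]
    push_cast
    rw [mul_inv]
    ring
  · have h1 : ¬ Powerful (m * n) := fun hc => hP ((powerful_mul_iff h).mp hc)
    rw [F, if_neg h1]
    rcases not_and_or.mp hP with hc | hc
    · have hm : F m = 0 := by simp [F, hc]
      rw [hm, zero_mul]
    · have hn : F n = 0 := by simp [F, hc]
      rw [hn, mul_zero]

lemma powerful_pow {p : ℕ} (hp : p.Prime) {e : ℕ} (he : e ≠ 1) : Powerful (p ^ e) := by
  refine ⟨pow_pos hp.pos e, fun q hq hd => ?_⟩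
  rcases Nat.eq_zero_or_pos e with rfl | he0
  · simp only [pow_zero, Nat.dvd_one] at hd
    exact absurd hd hq.ne_one
  · have hqp : q = p := (Nat.prime_dvd_prime_iff_eq hq hp).mp (hq.dvd_of_dvd_pow hd)
    subst hqp
    exact pow_dvd_pow q (by omega)

lemma not_powerful_prime {p : ℕ} (hp : p.Prime) : ¬ Powerful p := by
  rintro ⟨-, h⟩
  have := Nat.le_of_dvd hp.pos (h p hp dvd_rfl)
  nlinarith [hp.two_le]

lemma F_prime {p : ℕ} (hp : p.Prime) : F p = 0 := by
  simp [F, not_powerful_prime hp]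

lemma F_prime_pow {p : ℕ} (hp : p.Prime) {e : ℕ} (he : 2 ≤ e) :
    F (p ^ e) = ((p : ℝ) ^ e)⁻¹ * (1 + 1 / (p : ℝ))⁻¹ := by
  rw [F, if_pos (powerful_pow hp (by omega)),
    Nat.primeFactors_prime_pow (k := e) (by omega) hp, Finset.prod_singleton]
  push_cast
  ring

lemma two_le_factorization {f p : ℕ} (hf : Powerful f) (hp : p.Prime) (hd : p ∣ f) :
    2 ≤ f.factorization p :=
  (Nat.Prime.pow_dvd_iff_le_factorization hp hf.1.ne').mp (hf.2 p hp hd)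

lemma powerful_ordCompl {p f : ℕ} (hp : p.Prime) (hf : Powerful f) :
    Powerful (ordCompl[p] f) := by
  have hf0 : f ≠ 0 := hf.1.ne'
  refine ⟨Nat.ordCompl_pos p hf0, fun q hq hd => ?_⟩
  have hqf : q ∣ f := hd.trans (Nat.ordCompl_dvd f p)
  have hqp : q ≠ p := by
    rintro rfl
    exact Nat.not_dvd_ordCompl hp hf0 hd
  have hcop : Nat.Coprime (q ^ 2) (p ^ f.factorization p) :=
    Nat.Coprime.pow 2 _ ((Nat.coprime_primes hq hp).mpr hqp)
  refine hcop.dvd_of_dvd_mul_left ?_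
  rw [Nat.ordProj_mul_ordCompl_eq_self]
  exact hf.2 q hq hqf

lemma exists_sq_cube : ∀ f : ℕ, Powerful f → ∃ a b : ℕ, f = a ^ 2 * b ^ 3 := by
  intro f
  induction f using Nat.strong_induction_on with
  | _ n IH =>
    intro hf
    rcases eq_or_ne n 1 with rfl | hne
    · exact ⟨1, 1, by norm_num⟩
    have hf0 : n ≠ 0 := hf.1.ne'
    have hp : n.minFac.Prime := Nat.minFac_prime hne
    have hpd : n.minFac ∣ n := Nat.minFac_dvd n
    set p := n.minFac with hpdef
    set k := n.factorization p with hkdef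
    have hk2 : 2 ≤ k := two_le_factorization hf hp hpd
    set m := ordCompl[p] n with hmdef
    have hmf : p ^ k * m = n := Nat.ordProj_mul_ordCompl_eq_self n p
    have hmlt : m < n := by
      refine lt_of_le_of_ne (Nat.le_of_dvd hf.1 (Nat.ordCompl_dvd n p)) ?_
      intro hmn
      refine Nat.not_dvd_ordCompl hp hf0 ?_
      rw [← hmdef, hmn]
      exact hpd
    obtain ⟨a, b, hab⟩ := IH m hmlt (powerful_ordCompl hp hf)
    refine ⟨p ^ ((k - 3 * (k % 2)) / 2) * a, p ^ (k % 2) * b, ?_⟩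
    have h2 : 2 * ((k - 3 * (k % 2)) / 2) + 3 * (k % 2) = k := by omega
    calc n = p ^ k * m := hmf.symm
      _ = p ^ (2 * ((k - 3 * (k % 2)) / 2) + 3 * (k % 2)) * (a ^ 2 * b ^ 3) := by rw [h2, hab]
      _ = (p ^ ((k - 3 * (k % 2)) / 2) * a) ^ 2 * (p ^ (k % 2) * b) ^ 3 := by
          rw [pow_add, pow_mul, pow_mul, mul_pow, mul_pow]
          ring

set_option maxHeartbeats 1000000 in
lemma summable_powerful_inv :
    Summable (fun x : {n : ℕ // Powerful n} => ((x : ℕ) : ℝ)⁻¹) := by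
  have hs2 : Summable (fun n : ℕ => ((n : ℝ) ^ 2)⁻¹) :=
    Real.summable_nat_pow_inv.mpr (by norm_num : (1:ℕ) < 2)
  have hs3 : Summable (fun n : ℕ => ((n : ℝ) ^ 3)⁻¹) :=
    Real.summable_nat_pow_inv.mpr (by norm_num : (1:ℕ) < 3)
  have haux : Summable (fun x : ℕ × ℕ => ((x.1 : ℝ) ^ 2)⁻¹ * ((x.2 : ℝ) ^ 3)⁻¹) :=
    hs2.mul_of_nonneg hs3 (fun _ => by positivity) (fun _ => by positivity)
  have h := fun x : {n : ℕ // Powerful n} => exists_sq_cube x.1 x.2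
  choose A B hAB using h
  have hinj : Function.Injective (fun x : {n : ℕ // Powerful n} => (A x, B x)) := by
    intro x y hxy
    have h1 : A x = A y := congrArg Prod.fst hxy
    have h2 : B x = B y := congrArg Prod.snd hxy
    ext
    rw [hAB x, hAB y, h1, h2]
  refine (haux.comp_injective hinj).congr (fun x => ?_)
  simp only [Function.comp_apply]
  rw [← mul_inv]
  congr 1
  rw [hAB x]
  push_cast
  ring

lemma summable_F : Summable F := by
  have hb : Summable (fun n : ℕ => if Powerful n then (n : ℝ)⁻¹ else 0) := by
    have heq : (fun n : ℕ => if Powerful n then (n : ℝ)⁻¹ else 0) =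
        Set.indicator {n : ℕ | Powerful n} (fun n => (n : ℝ)⁻¹) := by
      funext n
      rw [Set.indicator_apply]
      simp [Set.mem_setOf_eq]
    rw [heq, ← summable_subtype_iff_indicator]
    exact summable_powerful_inv
  refine Summable.of_nonneg_of_le F_nonneg (fun n => ?_) hb
  by_cases hn : Powerful n
  · rw [if_pos hn]; exact F_le_inv n
  · rw [if_neg hn, F, if_neg hn]

lemma one_sub_inv_sq_pos {p : ℕ} (hp : p.Prime) : (0:ℝ) < 1 - ((p : ℝ) ^ 2)⁻¹ := by
  have hp2 : (2 : ℝ) ≤ (p : ℝ) := by exact_mod_cast hp.two_le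
  have : ((p : ℝ) ^ 2)⁻¹ < 1 := by
    rw [inv_lt_one_iff₀]; right; nlinarith
  linarith

lemma hasSum_F_pow {p : ℕ} (hp : p.Prime) :
    HasSum (fun e : ℕ => F (p ^ e)) ((1 - ((p : ℝ) ^ 2)⁻¹)⁻¹) := by
  have hp2 : (2 : ℝ) ≤ (p : ℝ) := by exact_mod_cast hp.two_le
  have hp0 : (0 : ℝ) < (p : ℝ) := by linarith
  have hr0 : (0:ℝ) ≤ ((p:ℝ))⁻¹ := by positivity
  have hr1 : ((p:ℝ))⁻¹ < 1 := by
    rw [inv_lt_one_iff₀]; right; linarith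
  have hFe : (fun e : ℕ => F (p ^ (e + 2))) =
      (fun e : ℕ => (((p:ℝ))⁻¹ ^ 2 * (1 + ((p:ℝ))⁻¹)⁻¹) * ((p:ℝ))⁻¹ ^ e) := by
    funext e
    rw [F_prime_pow hp (by omega), ← inv_pow, one_div, pow_add]
    ring
  have h2 : HasSum (fun e : ℕ => F (p ^ (e + 2)))
      ((((p:ℝ))⁻¹ ^ 2 * (1 + ((p:ℝ))⁻¹)⁻¹) * (1 - ((p:ℝ))⁻¹)⁻¹) := by
    rw [hFe]
    exact (hasSum_geometric_of_lt_one hr0 hr1).mul_left _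
  have h3 := (hasSum_nat_add_iff (f := fun e : ℕ => F (p ^ e)) 2).mp h2
  rw [show ∑ i ∈ Finset.range 2, F (p ^ i) = 1 by
    rw [Finset.sum_range_succ, Finset.sum_range_one, pow_zero, pow_one, F_one, F_prime hp]
    norm_num] at h3
  have hval : ((p:ℝ))⁻¹ ^ 2 * (1 + ((p:ℝ))⁻¹)⁻¹ * (1 - ((p:ℝ))⁻¹)⁻¹ + 1 =
      (1 - ((p : ℝ) ^ 2)⁻¹)⁻¹ := by
    have hp0' : ((p:ℝ)) ≠ 0 := by positivity
    have hpm1 : (p:ℝ) - 1 ≠ 0 := by nlinarith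
    have hpp1 : (p:ℝ) + 1 ≠ 0 := by positivity
    have hsq : (p:ℝ) ^ 2 - 1 ≠ 0 := by nlinarith
    have e1 : (1:ℝ) - ((p:ℝ) ^ 2)⁻¹ = ((p:ℝ) ^ 2 - 1) / (p:ℝ) ^ 2 := by field_simp
    have e2 : (1:ℝ) + ((p:ℝ))⁻¹ = ((p:ℝ) + 1) / (p:ℝ) := by field_simp
    have e3 : (1:ℝ) - ((p:ℝ))⁻¹ = ((p:ℝ) - 1) / (p:ℝ) := by field_simp
    rw [e1, e2, e3, inv_div, inv_div, inv_div]
    field_simp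
    ring
  rw [hval] at h3
  exact h3

/-- The function `n ↦ 1/n²`, with value `0` at `0`. -/
noncomputable def Hf (n : ℕ) : ℝ := ((n : ℝ) ^ 2)⁻¹

lemma Hf_zero : Hf 0 = 0 := by simp [Hf]

lemma Hf_one : Hf 1 = 1 := by simp [Hf]

lemma Hf_mul (m n : ℕ) : Hf (m * n) = Hf m * Hf n := by
  simp only [Hf]
  push_cast
  rw [mul_pow, mul_inv]

lemma summable_Hf : Summable Hf :=
  Real.summable_nat_pow_inv.mpr one_lt_two

lemma hasSum_Hf : HasSum Hf (π ^ 2 / 6) := by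
  have h := hasSum_zeta_two
  simp only [one_div] at h
  exact h

lemma hasSum_Hf_pow {p : ℕ} (hp : p.Prime) :
    HasSum (fun e : ℕ => Hf (p ^ e)) ((1 - ((p : ℝ) ^ 2)⁻¹)⁻¹) := by
  have hp2 : (2 : ℝ) ≤ (p : ℝ) := by exact_mod_cast hp.two_le
  have hq0 : (0:ℝ) ≤ ((p : ℝ) ^ 2)⁻¹ := by positivity
  have hq1 : ((p : ℝ) ^ 2)⁻¹ < 1 := by
    rw [inv_lt_one_iff₀]; right; nlinarith
  have he : (fun e : ℕ => Hf (p ^ e)) = fun e => (((p : ℝ) ^ 2)⁻¹) ^ e := by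
    funext e
    rw [Hf]
    push_cast
    rw [← pow_mul, mul_comm e 2, pow_mul, inv_pow]
  rw [he]
  exact hasSum_geometric_of_lt_one hq0 hq1

lemma norm_summable_F : Summable (fun n => ‖F n‖) :=
  summable_F.congr (fun n => (Real.norm_of_nonneg (F_nonneg n)).symm)

lemma norm_summable_Hf : Summable (fun n => ‖Hf n‖) :=
  summable_Hf.congr (fun n => (Real.norm_of_nonneg (by rw [Hf]; positivity)).symm)

lemma tsum_F : ∑' n : ℕ, F n = π ^ 2 / 6 := by
  have h1 := EulerProduct.eulerProduct_hasProd (f := F) F_one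
    (fun {m n} h => F_mul h) norm_summable_F F_zero
  have h2 := EulerProduct.eulerProduct_hasProd (f := Hf) Hf_one
    (fun {m n} _ => Hf_mul m n) norm_summable_Hf Hf_zero
  have heq : (fun p : Nat.Primes => ∑' e : ℕ, F ((p : ℕ) ^ e)) =
      fun p : Nat.Primes => ∑' e : ℕ, Hf ((p : ℕ) ^ e) := by
    funext p
    rw [(hasSum_F_pow p.2).tsum_eq, (hasSum_Hf_pow p.2).tsum_eq]
  rw [heq] at h1
  rw [h1.unique h2]
  exact hasSum_Hf.tsum_eq

/-! ### The `ℝ≥0∞`-valued theory -/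

/-- ENNReal version of `F`. -/
noncomputable def G (n : ℕ) : ENNReal := ENNReal.ofReal (F n)

lemma G_zero : G 0 = 0 := by simp [G, F_zero]

lemma G_eq_zero_of_not_powerful {n : ℕ} (hn : ¬ Powerful n) : G n = 0 := by
  simp [G, F, hn]

lemma G_mul {m n : ℕ} (h : Nat.Coprime m n) : G (m * n) = G m * G n := by
  simp only [G]
  rw [F_mul h, ENNReal.ofReal_mul (F_nonneg m)]

lemma tsum_G : ∑' n : ℕ, G n = ENNReal.ofReal (π ^ 2 / 6) := by
  simp only [G]
  rw [← ENNReal.ofReal_tsum_of_nonneg F_nonneg summable_F, tsum_F]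

/-- The sum of `G` over powerful numbers not divisible by `p`. -/
noncomputable def Sp (p : ℕ) : ENNReal := ∑' n : ℕ, if p ∣ n then 0 else G n

lemma fiber_sum {p : ℕ} (hp : p.Prime) (j : ℕ) :
    (∑' n : ℕ, if n.factorization p = j then G n else 0) = G (p ^ j) * Sp p := by
  classical
  set w : ℕ → ENNReal := fun n => if n.factorization p = j then G n else 0 with hw
  have hsupp : Function.support w ⊆ Set.range (fun t : ℕ => p ^ j * t) := by
    intro n hn
    simp only [hw, Function.mem_support] at hn
    have hj : n.factorization p = j := by
      by_contra hc
      rw [if_neg hc] at hn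
      exact hn rfl
    have hG : G n ≠ 0 := by
      intro hc
      rw [if_pos hj, hc] at hn
      exact hn rfl
    have hn0 : n ≠ 0 := by
      rintro rfl
      exact hG G_zero
    exact ⟨ordCompl[p] n, by simp only []; rw [← hj]; exact Nat.ordProj_mul_ordCompl_eq_self n p⟩
  have hinj : Function.Injective (fun t : ℕ => p ^ j * t) := fun x y hxy =>
    Nat.eq_of_mul_eq_mul_left (pow_pos hp.pos j) hxy
  rw [← hinj.tsum_eq hsupp]
  have hterm : ∀ t : ℕ, w (p ^ j * t) = G (p ^ j) * (if p ∣ t then 0 else G t) := by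
    intro t
    rcases eq_or_ne t 0 with rfl | ht0
    · simp [hw, G_zero, mul_zero]
    by_cases hpt : p ∣ t
    · rw [if_pos hpt, mul_zero]
      have hfac : (p ^ j * t).factorization p = j + t.factorization p := by
        rw [Nat.factorization_mul (pow_ne_zero j hp.pos.ne') ht0]
        simp [hp.factorization_pow, Finsupp.single_eq_same]
      have hpos : 0 < t.factorization p := hp.factorization_pos_of_dvd ht0 hpt
      rw [hw]
      simp only
      rw [if_neg (by omega)]
    · rw [if_neg hpt]
      have hfac : (p ^ j * t).factorization p = j := by
        rw [Nat.factorization_mul (pow_ne_zero j hp.pos.ne') ht0]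
        simp [hp.factorization_pow, Finsupp.single_eq_same,
          Nat.factorization_eq_zero_of_not_dvd hpt]
      have hcop : Nat.Coprime (p ^ j) t := (hp.coprime_iff_not_dvd.mpr hpt).pow_left j
      rw [hw]
      simp only
      rw [if_pos hfac, G_mul hcop]
  calc ∑' t : ℕ, w (p ^ j * t) = ∑' t : ℕ, G (p ^ j) * (if p ∣ t then 0 else G t) :=
        tsum_congr hterm
    _ = G (p ^ j) * Sp p := ENNReal.tsum_mul_left

lemma partition_sum {p : ℕ} (hp : p.Prime) :
    (∑' j : ℕ, G (p ^ j)) * Sp p = ENNReal.ofReal (π ^ 2 / 6) := by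
  classical
  calc (∑' j : ℕ, G (p ^ j)) * Sp p = ∑' j : ℕ, G (p ^ j) * Sp p := by
        rw [ENNReal.tsum_mul_right]
    _ = ∑' j : ℕ, ∑' n : ℕ, (if n.factorization p = j then G n else 0) := by
        refine tsum_congr (fun j => ?_)
        rw [fiber_sum hp j]
    _ = ∑' n : ℕ, ∑' j : ℕ, (if n.factorization p = j then G n else 0) := ENNReal.tsum_comm
    _ = ∑' n : ℕ, G n := by
        refine tsum_congr (fun n => ?_)
        rw [tsum_eq_single (n.factorization p) (fun j hj => if_neg (fun hc => hj hc.symm))]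
        rw [if_pos rfl]
    _ = ENNReal.ofReal (π ^ 2 / 6) := tsum_G

lemma tsum_G_pow {p : ℕ} (hp : p.Prime) :
    ∑' j : ℕ, G (p ^ j) = ENNReal.ofReal ((1 - ((p : ℝ) ^ 2)⁻¹)⁻¹) := by
  rw [← (hasSum_F_pow hp).tsum_eq]
  exact (ENNReal.ofReal_tsum_of_nonneg (fun e => F_nonneg _)
    (hasSum_F_pow hp).summable).symm

lemma Sp_eq {p : ℕ} (hp : p.Prime) :
    Sp p = ENNReal.ofReal (π ^ 2 / 6 * (1 - ((p : ℝ) ^ 2)⁻¹)) := by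
  have hpos := one_sub_inv_sq_pos hp
  have hL0 : ENNReal.ofReal ((1 - ((p : ℝ) ^ 2)⁻¹)⁻¹) ≠ 0 := by
    rw [Ne, ENNReal.ofReal_eq_zero]
    exact not_le.mpr (by positivity)
  have hLtop : ENNReal.ofReal ((1 - ((p : ℝ) ^ 2)⁻¹)⁻¹) ≠ ⊤ := ENNReal.ofReal_ne_top
  have key : ENNReal.ofReal ((1 - ((p : ℝ) ^ 2)⁻¹)⁻¹) * Sp p =
      ENNReal.ofReal ((1 - ((p : ℝ) ^ 2)⁻¹)⁻¹) *
        ENNReal.ofReal (π ^ 2 / 6 * (1 - ((p : ℝ) ^ 2)⁻¹)) := by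
    rw [← ENNReal.ofReal_mul (by positivity)]
    rw [show (1 - ((p : ℝ) ^ 2)⁻¹)⁻¹ * (π ^ 2 / 6 * (1 - ((p : ℝ) ^ 2)⁻¹)) = π ^ 2 / 6 by
      rw [mul_comm (π ^ 2 / 6), ← mul_assoc, inv_mul_cancel₀ (ne_of_gt hpos), one_mul]]
    rw [← tsum_G_pow hp]
    exact partition_sum hp
  exact (ENNReal.mul_right_inj hL0 hLtop).mp key

lemma G_prime_pow {p : ℕ} (hp : p.Prime) {j : ℕ} (hj : 2 ≤ j) :
    G (p ^ j) = ENNReal.ofReal (((p : ℝ) ^ j)⁻¹ * (1 + 1 / (p : ℝ))⁻¹) := by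
  simp only [G]
  rw [F_prime_pow hp hj]

/-- The per-prime-power evaluation. -/
lemma per_term {p : ℕ} (hp : p.Prime) {j : ℕ} (hj : 2 ≤ j) :
    ENNReal.ofReal (6 / π ^ 2) * (G (p ^ j) * Sp p) =
      1 / ((p : ℕ) : ENNReal) ^ j - 1 / ((p : ℕ) : ENNReal) ^ (j + 1) := by
  have hp2 : (2 : ℝ) ≤ (p : ℝ) := by exact_mod_cast hp.two_le
  have hp0 : (0 : ℝ) < (p : ℝ) := by linarith
  have hπ : (0:ℝ) < π := Real.pi_pos
  rw [G_prime_pow hp hj, Sp_eq hp, ← ENNReal.ofReal_mul (by positivity),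
    ← ENNReal.ofReal_mul (by positivity)]
  have hval : 6 / π ^ 2 * (((p : ℝ) ^ j)⁻¹ * (1 + 1 / (p : ℝ))⁻¹ *
      (π ^ 2 / 6 * (1 - ((p : ℝ) ^ 2)⁻¹))) = ((p : ℝ) ^ j)⁻¹ - ((p : ℝ) ^ (j + 1))⁻¹ := by
    have h1 : (1:ℝ) + 1 / (p:ℝ) ≠ 0 := by positivity
    field_simp
    ring
  rw [hval]
  have hcast : ((p : ℕ) : ENNReal) = ENNReal.ofReal ((p : ℝ)) := by
    rw [ENNReal.ofReal_natCast]
  have e1 : 1 / ((p : ℕ) : ENNReal) ^ j = ENNReal.ofReal (((p:ℝ) ^ j)⁻¹) := by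
    rw [hcast, ← ENNReal.ofReal_pow hp0.le, one_div,
      ← ENNReal.ofReal_inv_of_pos (by positivity)]
  have e2 : 1 / ((p : ℕ) : ENNReal) ^ (j + 1) = ENNReal.ofReal (((p:ℝ) ^ (j + 1))⁻¹) := by
    rw [hcast, ← ENNReal.ofReal_pow hp0.le, one_div,
      ← ENNReal.ofReal_inv_of_pos (by positivity)]
  rw [e1, e2, ENNReal.ofReal_sub _ (by positivity)]

/-- Expression of `omegaA` as a sum over pairs `(p, j)`. -/
lemma omegaA_tsum {a : ℕ → ℕ} {f : ℕ} (hf : Powerful f) :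
    (∑' q : Nat.Primes, ∑' j : ℕ,
        if f.factorization (q : ℕ) = j ∧ 2 ≤ j then (a j : ENNReal) else 0) =
      (omegaA a f : ENNReal) := by
  classical
  have hf0 : f ≠ 0 := hf.1.ne'
  have hinner : ∀ q : Nat.Primes,
      (∑' j : ℕ, if f.factorization (q : ℕ) = j ∧ 2 ≤ j then (a j : ENNReal) else 0) =
        if 2 ≤ f.factorization (q : ℕ) then (a (f.factorization (q : ℕ)) : ENNReal) else 0 := by
    intro q
    rw [tsum_eq_single (f.factorization (q : ℕ)) ?_]
    · by_cases h2 : 2 ≤ f.factorization (q : ℕ)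
      · rw [if_pos ⟨rfl, h2⟩, if_pos h2]
      · rw [if_neg (fun hc => h2 hc.2), if_neg h2]
    · intro j hj
      exact if_neg (fun hc => hj hc.1.symm)
  rw [tsum_congr hinner]
  set s : Finset Nat.Primes := f.primeFactors.attach.map
    ⟨fun x : {x // x ∈ f.primeFactors} =>
      (⟨x.1, Nat.prime_of_mem_primeFactors x.2⟩ : Nat.Primes),
      fun x y hxy => Subtype.ext (congrArg (fun z : Nat.Primes => z.1) hxy)⟩ with hs
  have hmem : ∀ q : Nat.Primes, q ∈ s ↔ (q : ℕ) ∈ f.primeFactors := by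
    intro q
    rw [hs, Finset.mem_map]
    constructor
    · rintro ⟨x, -, rfl⟩
      exact x.2
    · intro hq
      exact ⟨⟨(q : ℕ), hq⟩, Finset.mem_attach _ _, rfl⟩
  rw [tsum_eq_sum (s := s) ?_]
  · have hsum : ∑ q ∈ s, (if 2 ≤ f.factorization (q : ℕ)
        then (a (f.factorization (q : ℕ)) : ENNReal) else 0) =
        ∑ p ∈ f.primeFactors, (a (f.factorization p) : ENNReal) := by
      rw [hs, Finset.sum_map]
      show ∑ x ∈ f.primeFactors.attach, (if 2 ≤ f.factorization x.1
        then (a (f.factorization x.1) : ENNReal) else 0) = _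
      rw [← Finset.sum_attach f.primeFactors
        (fun p => (a (f.factorization p) : ENNReal))]
      refine Finset.sum_congr rfl (fun x _ => ?_)
      have h2 : 2 ≤ f.factorization x.1 :=
        two_le_factorization hf (Nat.prime_of_mem_primeFactors x.2)
          (Nat.dvd_of_mem_primeFactors x.2)
      rw [if_pos h2]
    rw [hsum, omegaA, Nat.cast_sum]
  · intro q hq
    have : (q : ℕ) ∉ f.primeFactors := fun hc => hq ((hmem q).mpr hc)
    have hz : f.factorization (q : ℕ) = 0 := by
      rw [← Finsupp.notMem_support_iff, Nat.support_factorization]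
      exact this
    rw [hz]
    norm_num

end EAMaux

theorem eAm_expectation (a : ℕ → ℕ) (h1 : a 1 = 0) :
    ∑' m : ℕ, (m : ENNReal) * ENNReal.ofReal (eAm a m) =
      ∑' (p : Nat.Primes) (j : ℕ),
        if 2 ≤ j then
          (a j : ENNReal) * (1 / ((p : ℕ) : ENNReal) ^ j - 1 / ((p : ℕ) : ENNReal) ^ (j + 1))
        else 0 := by
  classical
  open EAMaux Real in
  set C : ENNReal := ENNReal.ofReal (6 / π ^ 2) with hC
  -- Step A : rewrite `eAm` in terms of `G`
  have hA : ∀ m : ℕ, ENNReal.ofReal (eAm a m) =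
      C * ∑' n : ℕ, (if omegaA a n = m then G n else 0) := by
    intro m
    have hterm : ∀ x : {f : ℕ // Powerful f ∧ omegaA a f = m},
        ((x : ℕ) : ℝ)⁻¹ * ∏ p ∈ (x : ℕ).primeFactors, (1 + 1 / (p : ℝ))⁻¹ = F (x : ℕ) :=
      fun x => by rw [F, if_pos x.2.1]
    have hsummable : Summable (fun x : {f : ℕ // Powerful f ∧ omegaA a f = m} =>
        ((x : ℕ) : ℝ)⁻¹ * ∏ p ∈ (x : ℕ).primeFactors, (1 + 1 / (p : ℝ))⁻¹) :=
      (summable_F.comp_injective Subtype.val_injective).congr (fun x => (hterm x).symm)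
    rw [eAm, ENNReal.ofReal_mul (by positivity)]
    congr 1
    rw [ENNReal.ofReal_tsum_of_nonneg (fun x => by
      rw [hterm x]; exact F_nonneg _) hsummable]
    set W : ℕ → ENNReal := fun n => if omegaA a n = m then G n else 0 with hW
    have hWsupp : Function.support W ⊆ {f : ℕ | Powerful f ∧ omegaA a f = m} := by
      intro n hn
      simp only [hW, Function.mem_support] at hn
      have hω : omegaA a n = m := by
        by_contra hc
        exact hn (if_neg hc)
      have hG : G n ≠ 0 := fun hc => hn (by rw [if_pos hω, hc])
      have hP : Powerful n := by
        by_contra hc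
        exact hG (G_eq_zero_of_not_powerful hc)
      exact ⟨hP, hω⟩
    have hsub := tsum_subtype_eq_of_support_subset hWsupp
    rw [← hsub]
    refine tsum_congr (fun x => ?_)
    have hx2 : omegaA a (x : ℕ) = m := x.2.2
    rw [hW]
    simp only
    rw [if_pos hx2, G]
    rw [hterm x]
  -- Step B : the chain of rewritings
  calc ∑' m : ℕ, (m : ENNReal) * ENNReal.ofReal (eAm a m)
      = C * ∑' m : ℕ, ∑' n : ℕ,
          (if omegaA a n = m then (m : ENNReal) * G n else 0) := by
        rw [← ENNReal.tsum_mul_left]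
        refine tsum_congr (fun m => ?_)
        rw [hA m, mul_left_comm]
        congr 1
        rw [← ENNReal.tsum_mul_left]
        exact tsum_congr (fun n => by rw [mul_ite, mul_zero])
    _ = C * ∑' n : ℕ, ∑' m : ℕ,
          (if omegaA a n = m then (m : ENNReal) * G n else 0) := by
        rw [ENNReal.tsum_comm]
    _ = C * ∑' n : ℕ, (omegaA a n : ENNReal) * G n := by
        congr 1
        refine tsum_congr (fun n => ?_)
        rw [tsum_eq_single (omegaA a n) (fun m hm => if_neg (fun hc => hm hc.symm)),
          if_pos rfl]
    _ = C * ∑' n : ℕ, ∑' q : Nat.Primes, ∑' j : ℕ,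
          (if n.factorization (q : ℕ) = j ∧ 2 ≤ j then (a j : ENNReal) * G n else 0) := by
        congr 1
        refine tsum_congr (fun n => ?_)
        by_cases hP : Powerful n
        · rw [← omegaA_tsum (a := a) hP, ← ENNReal.tsum_mul_right]
          refine tsum_congr (fun q => ?_)
          rw [← ENNReal.tsum_mul_right]
          exact tsum_congr (fun j => by rw [ite_mul, zero_mul])
        · rw [G_eq_zero_of_not_powerful hP]
          simp only [mul_zero, ite_self, tsum_zero]
    _ = C * ∑' q : Nat.Primes, ∑' j : ℕ, ∑' n : ℕ,
          (if n.factorization (q : ℕ) = j ∧ 2 ≤ j then (a j : ENNReal) * G n else 0) := by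
        congr 1
        rw [ENNReal.tsum_comm]
        exact tsum_congr (fun q => ENNReal.tsum_comm)
    _ = C * ∑' q : Nat.Primes, ∑' j : ℕ,
          (if 2 ≤ j then (a j : ENNReal) * (G ((q : ℕ) ^ j) * Sp (q : ℕ)) else 0) := by
        congr 1
        refine tsum_congr (fun q => tsum_congr (fun j => ?_))
        by_cases hj : 2 ≤ j
        · rw [if_pos hj]
          have hco : ∀ n : ℕ, (if n.factorization (q : ℕ) = j ∧ 2 ≤ j
              then (a j : ENNReal) * G n else 0) =
              (a j : ENNReal) * (if n.factorization (q : ℕ) = j then G n else 0) := by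
            intro n
            by_cases hc : n.factorization (q : ℕ) = j
            · rw [if_pos ⟨hc, hj⟩, if_pos hc]
            · rw [if_neg (fun h => hc h.1), if_neg hc, mul_zero]
          rw [tsum_congr hco, ENNReal.tsum_mul_left, fiber_sum q.2 j]
        · rw [if_neg hj]
          simp only [hj, and_false, if_false, tsum_zero]
    _ = ∑' (q : Nat.Primes) (j : ℕ),
          if 2 ≤ j then
            (a j : ENNReal) * (1 / ((q : ℕ) : ENNReal) ^ j - 1 / ((q : ℕ) : ENNReal) ^ (j + 1))
          else 0 := by
        rw [← ENNReal.tsum_mul_left]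
        refine tsum_congr (fun q => ?_)
        rw [← ENNReal.tsum_mul_left]
        refine tsum_congr (fun j => ?_)
        by_cases hj : 2 ≤ j
        · rw [if_pos hj, if_pos hj, mul_left_comm]
          congr 1
          exact per_term q.2 hj
        · rw [if_neg hj, if_neg hj, mul_zero]
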